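/- A closed symmetric monoidal category V is *-autonomous if and only if it is equipped with a full and faithful functor (−)* : Vᵒᵖ → V together with a natural isomorphism V(A ⊗ B, C*) ≅ V(A, (B ⊗ C)*). -/

import Mathlib

set_option linter.unusedSectionVars false

open CategoryTheory MonoidalCategory MonoidalClosed Opposite

universe u v

namespace StarAutAux

variable {C : Type u} [Category.{v} C] [MonoidalCategory C]
  [SymmetricCategory C] [MonoidalClosed C]

/-- The double-dualization-defining map. -/
def delta (D A : C) : A ⟶ (ihom ((ihom A).obj D)).obj D :=
  MonoidalClosed.curry ((β_ ((ihom A).obj D) A).hom ≫ (ihom.ev A).app D)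

/-- The contravariant dualization functor `X ↦ X ⊸ D`. -/
@[simps]
def T (D : C) : Cᵒᵖ ⥤ C where
  obj X := (ihom X.unop).obj D
  map f := (MonoidalClosed.pre f.unop).app D
  map_id X := by simp
  map_comp f g := by simp [MonoidalClosed.pre_map]

/-- Flip a map into an internal hom. -/
def fm (D : C) {A X : C} (k : X ⟶ (ihom A).obj D) : A ⟶ (ihom X).obj D :=
  MonoidalClosed.curry ((β_ X A).hom ≫ MonoidalClosed.uncurry k)

lemma fm_fm (D : C) {A X : C} (k : X ⟶ (ihom A).obj D) : fm D (fm D k) = k := by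
  simp [fm]

lemma fm_natural_right (D : C) {A X X' : C} (g : X' ⟶ X) (k : X ⟶ (ihom A).obj D) :
    fm D (g ≫ k) = fm D k ≫ (MonoidalClosed.pre g).app D := by
  apply MonoidalClosed.uncurry_injective
  rw [MonoidalClosed.uncurry_natural_left]
  simp only [fm, MonoidalClosed.uncurry_pre, MonoidalClosed.uncurry_curry,
    MonoidalClosed.uncurry_natural_left]
  rw [whisker_exchange_assoc, ← MonoidalClosed.uncurry_eq]
  simp [fm]


/-- The self-duality adjunction `(T D).rightOp ⊣ T D`. -/
def adjT (D : C) : (T D).rightOp ⊣ T D :=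
  Adjunction.mkOfHomEquiv
  { homEquiv := fun A Y =>
      { toFun := fun k => fm D k.unop
        invFun := fun h => (fm D h).op
        left_inv := fun k => by exact Quiver.Hom.unop_inj (fm_fm D _)
        right_inv := fun h => by exact fm_fm D h }
    homEquiv_naturality_left_symm := fun {A' A Y} f g => by
      dsimp
      change (fm D (f ≫ g)).op = ((T D).map f.op).op ≫ (fm D g).op
      exact congrArg Quiver.Hom.op (fm_natural_right D f g)
    homEquiv_naturality_right := fun {A Y Y'} f g => by
      dsimp
      change fm D (g.unop ≫ f.unop) = fm D f.unop ≫ (T D).map g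
      exact fm_natural_right D g.unop f.unop }

lemma adjT_counit_app (D : C) (Y : Cᵒᵖ) :
    (adjT D).counit.app Y = (delta D Y.unop).op := by
  dsimp [adjT, Adjunction.mkOfHomEquiv, Adjunction.mk']
  change (fm D (𝟙 ((T D).obj Y))).op = (delta D Y.unop).op
  congr 1
  simp [fm, delta, MonoidalClosed.uncurry_id_eq_ev]
  rw [show uncurry (𝟙 ((T D).obj Y)) = (ihom.ev (unop Y)).app D from
    MonoidalClosed.uncurry_id_eq_ev _ _]
  rfl


/-- Structural iso used to define the natural equivalence. -/
def gam (A B X : C) : (B ⊗ X) ⊗ A ≅ X ⊗ (A ⊗ B) :=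
  β_ (B ⊗ X) A ≪≫ (α_ A B X).symm ≪≫ β_ (A ⊗ B) X

/-- The natural equivalence `Hom(A ⊗ B, X ⊸ D) ≃ Hom(A, (B ⊗ X) ⊸ D)`. -/
def eT (D A B X : C) :
    (A ⊗ B ⟶ (ihom X).obj D) ≃ (A ⟶ (ihom (B ⊗ X)).obj D) where
  toFun g := MonoidalClosed.curry ((gam A B X).hom ≫ MonoidalClosed.uncurry g)
  invFun h := MonoidalClosed.curry ((gam A B X).inv ≫ MonoidalClosed.uncurry h)
  left_inv g := by simp
  right_inv h := by simp

lemma eT_nat1 (D A A' B X : C) (a : A' ⟶ A) (g : A ⊗ B ⟶ (ihom X).obj D) :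
    eT D A' B X (a ▷ B ≫ g) = a ≫ eT D A B X g := by
  apply MonoidalClosed.uncurry_injective
  rw [MonoidalClosed.uncurry_natural_left]
  simp only [eT, Equiv.coe_fn_mk, MonoidalClosed.uncurry_curry,
    MonoidalClosed.uncurry_natural_left, gam, Iso.trans_hom, Iso.symm_hom, Category.assoc]
  rw [BraidedCategory.braiding_naturality_right_assoc]
  rw [associator_inv_naturality_left_assoc, BraidedCategory.braiding_naturality_left_assoc]

lemma eT_nat2 (D A B B' X : C) (b : B' ⟶ B) (g : A ⊗ B ⟶ (ihom X).obj D) :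
    eT D A B' X (A ◁ b ≫ g) = eT D A B X g ≫ (MonoidalClosed.pre (b ▷ X)).app D := by
  apply MonoidalClosed.uncurry_injective
  rw [MonoidalClosed.uncurry_natural_left, MonoidalClosed.uncurry_pre,
    whisker_exchange_assoc, ← MonoidalClosed.uncurry_eq]
  simp only [eT, Equiv.coe_fn_mk, MonoidalClosed.uncurry_curry,
    MonoidalClosed.uncurry_natural_left, gam, Iso.trans_hom, Iso.symm_hom, Category.assoc]
  rw [BraidedCategory.braiding_naturality_left_assoc,
    associator_inv_naturality_middle_assoc, BraidedCategory.braiding_naturality_left_assoc]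

lemma eT_nat3 (D A B X X' : C) (x : X' ⟶ X) (g : A ⊗ B ⟶ (ihom X).obj D) :
    eT D A B X' (g ≫ (MonoidalClosed.pre x).app D) =
      eT D A B X g ≫ (MonoidalClosed.pre (B ◁ x)).app D := by
  apply MonoidalClosed.uncurry_injective
  rw [MonoidalClosed.uncurry_natural_left, MonoidalClosed.uncurry_pre,
    whisker_exchange_assoc, ← MonoidalClosed.uncurry_eq]
  simp only [eT, Equiv.coe_fn_mk, MonoidalClosed.uncurry_curry,
    MonoidalClosed.uncurry_natural_left, gam, Iso.trans_hom, Iso.symm_hom, Category.assoc]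
  rw [MonoidalClosed.uncurry_pre, whisker_exchange_assoc, ← MonoidalClosed.uncurry_eq]
  rw [BraidedCategory.braiding_naturality_left_assoc,
    associator_inv_naturality_right_assoc, BraidedCategory.braiding_naturality_right_assoc]


section Backward

variable (S : Cᵒᵖ ⥤ C)
  (e : ∀ A B X : C, (A ⊗ B ⟶ S.obj (op X)) ≃ (A ⟶ S.obj (op (B ⊗ X))))

/-- Evaluation-like map built from the abstract natural equivalence. -/
def vmap (X : C) : S.obj (op X) ⊗ X ⟶ S.obj (op (𝟙_ C)) :=
  (e (S.obj (op X)) X (𝟙_ C)).symm (S.map ((ρ_ X).hom.op))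

/-- Comparison map `X* ⟶ X ⊸ 𝟙*`. -/
def jmap (X : C) : S.obj (op X) ⟶ (ihom X).obj (S.obj (op (𝟙_ C))) :=
  MonoidalClosed.curry ((β_ X (S.obj (op X))).hom ≫ vmap S e X)

/-- Comparison map `(X ⊸ 𝟙*) ⟶ X*`. -/
def wmap (X : C) : (ihom X).obj (S.obj (op (𝟙_ C))) ⟶ S.obj (op X) :=
  e ((ihom X).obj (S.obj (op (𝟙_ C)))) X (𝟙_ C)
      ((β_ ((ihom X).obj (S.obj (op (𝟙_ C)))) X).hom ≫ (ihom.ev X).app (S.obj (op (𝟙_ C))))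
    ≫ S.map ((ρ_ X).inv.op)

variable
  (n1 : ∀ (A A' B X : C) (a : A' ⟶ A) (g : A ⊗ B ⟶ S.obj (op X)),
      e A' B X (a ▷ B ≫ g) = a ≫ e A B X g)
  (n2 : ∀ (A B B' X : C) (b : B' ⟶ B) (g : A ⊗ B ⟶ S.obj (op X)),
      e A B' X (A ◁ b ≫ g) = e A B X g ≫ S.map (b ▷ X).op)

include n1

lemma n1s {A A' B X : C} (a : A' ⟶ A) (h : A ⟶ S.obj (op (B ⊗ X))) :
    (e A' B X).symm (a ≫ h) = a ▷ B ≫ (e A B X).symm h := by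
  apply (e A' B X).injective
  rw [Equiv.apply_symm_apply, n1, Equiv.apply_symm_apply]

lemma wmap_vmap (X : C) :
    wmap S e X ▷ X ≫ vmap S e X =
      (β_ ((ihom X).obj (S.obj (op (𝟙_ C)))) X).hom ≫ (ihom.ev X).app (S.obj (op (𝟙_ C))) := by
  rw [vmap, ← n1s S e n1, wmap, Category.assoc, ← S.map_comp, ← op_comp,
    Iso.hom_inv_id, op_id, S.map_id, Category.comp_id, Equiv.symm_apply_apply]

lemma wmap_jmap (X : C) : wmap S e X ≫ jmap S e X = 𝟙 _ := by
  rw [jmap, ← MonoidalClosed.curry_natural_left,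
    BraidedCategory.braiding_naturality_right_assoc, wmap_vmap S e n1,
    SymmetricCategory.symmetry_assoc, ← MonoidalClosed.uncurry_id_eq_ev,
    MonoidalClosed.curry_uncurry]

lemma jmap_vmap (X : C) :
    jmap S e X ▷ X ≫ (β_ ((ihom X).obj (S.obj (op (𝟙_ C)))) X).hom ≫
        (ihom.ev X).app (S.obj (op (𝟙_ C))) = vmap S e X := by
  rw [BraidedCategory.braiding_naturality_left_assoc, ← MonoidalClosed.uncurry_eq, jmap,
    MonoidalClosed.uncurry_curry, SymmetricCategory.symmetry_assoc]

lemma jmap_wmap (X : C) : jmap S e X ≫ wmap S e X = 𝟙 _ := by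
  rw [wmap, ← Category.assoc, ← n1, jmap_vmap S e n1, vmap, Equiv.apply_symm_apply,
    ← S.map_comp, ← op_comp, Iso.inv_hom_id, op_id, S.map_id]

include n2

lemma n2s {A B B' X : C} (b : B' ⟶ B) (h : A ⟶ S.obj (op (B ⊗ X))) :
    (e A B' X).symm (h ≫ S.map ((b ▷ X).op)) = A ◁ b ≫ (e A B X).symm h := by
  apply (e A B' X).injective
  rw [Equiv.apply_symm_apply, n2, Equiv.apply_symm_apply]

lemma vmap_natural {Y X : C} (f : Y ⟶ X) :
    S.map f.op ▷ Y ≫ vmap S e Y = S.obj (op X) ◁ f ≫ vmap S e X := by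
  rw [vmap, vmap, ← n1s S e n1, ← n2s S e n1 n2, ← S.map_comp, ← S.map_comp,
    ← op_comp, ← op_comp, rightUnitor_naturality]

lemma jmap_natural {Y X : C} (f : Y ⟶ X) :
    S.map f.op ≫ jmap S e Y = jmap S e X ≫ (MonoidalClosed.pre f).app (S.obj (op (𝟙_ C))) := by
  apply MonoidalClosed.uncurry_injective
  rw [MonoidalClosed.uncurry_natural_left, MonoidalClosed.uncurry_natural_left,
    MonoidalClosed.uncurry_pre, whisker_exchange_assoc, ← MonoidalClosed.uncurry_eq,
    jmap, jmap, MonoidalClosed.uncurry_curry, MonoidalClosed.uncurry_curry,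
    BraidedCategory.braiding_naturality_right_assoc,
    BraidedCategory.braiding_naturality_left_assoc, vmap_natural S e n1 n2]

end Backward

end StarAutAux


open StarAutAux in
/-- A closed symmetric monoidal category `C` is *-autonomous (has a dualizing object `D`
with the canonical map `A ⟶ (A ⊸ D) ⊸ D` invertible for all `A`) if and only if it is
equipped with a full and faithful functor `(−)* : Cᵒᵖ ⥤ C` together with a natural
isomorphism `Hom(A ⊗ B, X*) ≅ Hom(A, (B ⊗ X)*)`. -/
theorem star_autonomous_iff_dualization {C : Type u} [Category.{v} C] [MonoidalCategory C]
    [SymmetricCategory C] [MonoidalClosed C] :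
    (∃ D : C, ∀ A : C,
      IsIso (MonoidalClosed.curry ((β_ ((ihom A).obj D) A).hom ≫ (ihom.ev A).app D)))
    ↔
    ∃ S : Cᵒᵖ ⥤ C, S.Full ∧ S.Faithful ∧
      ∃ e : ∀ A B X : C, (A ⊗ B ⟶ S.obj (op X)) ≃ (A ⟶ S.obj (op (B ⊗ X))),
        (∀ (A A' B X : C) (a : A' ⟶ A) (g : A ⊗ B ⟶ S.obj (op X)),
          e A' B X (a ▷ B ≫ g) = a ≫ e A B X g) ∧
        (∀ (A B B' X : C) (b : B' ⟶ B) (g : A ⊗ B ⟶ S.obj (op X)),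
          e A B' X (A ◁ b ≫ g) = e A B X g ≫ S.map (b ▷ X).op) ∧
        (∀ (A B X X' : C) (x : X' ⟶ X) (g : A ⊗ B ⟶ S.obj (op X)),
          e A B X' (g ≫ S.map x.op) = e A B X g ≫ S.map (B ◁ x).op) := by
  constructor
  · rintro ⟨D, hD⟩
    haveI : ∀ Y : Cᵒᵖ, IsIso ((adjT D).counit.app Y) := fun Y => by
      rw [adjT_counit_app]
      haveI : IsIso (delta D Y.unop) := hD Y.unop
      exact isIso_op _
    haveI : IsIso (adjT D).counit := NatIso.isIso_of_isIso_app _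
    have ff := (adjT D).fullyFaithfulROfIsIsoCounit
    exact ⟨T D, ff.full, ff.faithful, fun A B X => eT D A B X,
      fun A A' B X a g => eT_nat1 D A A' B X a g,
      fun A B B' X b g => eT_nat2 D A B B' X b g,
      fun A B X X' x g => eT_nat3 D A B X X' x g⟩
  · rintro ⟨S, hFull, hFaith, e, n1, n2, n3⟩
    haveI := hFull
    haveI := hFaith
    set D := S.obj (op (𝟙_ C)) with hd
    let iso : S ≅ T D := NatIso.ofComponents
      (fun X => ⟨jmap S e X.unop, wmap S e X.unop,
        jmap_wmap S e n1 X.unop, wmap_jmap S e n1 X.unop⟩)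
      (fun {X Y} f => jmap_natural S e n1 n2 f.unop)
    haveI : (T D).Full := Functor.Full.of_iso iso
    haveI : (T D).Faithful := Functor.Faithful.of_iso iso
    haveI : IsIso (adjT D).counit := (adjT D).counit_isIso_of_R_fully_faithful
    refine ⟨D, fun A => ?_⟩
    have h1 : IsIso ((adjT D).counit.app (op A)) := inferInstance
    rw [adjT_counit_app] at h1
    exact @isIso_of_op _ _ _ _ (delta D A) h1
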